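/- Let ℓ ≥ 1, let σ(1), …, σ(ℓ) be finite multisets of positive integers, and let π = (p₁, …, p_h) be a finite (possibly empty) sequence of positive integers. For each i let s_i = |σ(i)| and let a(i)_1, …, a(i)_{t_i} be the multiplicities of the distinct elements of σ(i). Then ∑ (−1)^{m−h} = ∏_{i=1}^{ℓ} (−1)^{s_i} · s_i! / (a(i)_1! ⋯ a(i)_{t_i}!), where the (finite) sum on the left runs over all integers m ≥ 0 and all tuples (c, d(1), …, d(ℓ)) with c = (c₁, …, c_m) a sequence of positive integers and each d(i) = (d(i)_1, …, d(i)_m) a sequence of nonnegative integers, subject to: (1) ∑_{i=1}^ℓ d(i)_j ≤ c_j for every j; (2) for each i, the multiset of nonzero values among d(i)_1, …, d(i)_m equals σ(i); (3) the subsequence of nonzero entries of the sequence (c₁ − ∑_i d(i)_1, …, c_m − ∑_i d(i)_m) equals (p₁, …, p_h). (This is Lemma 3.7 of the paper, encoding an element μ of 𝒬 with exactly m distinct parts by the sequence c of its part-multiplicities, the distinguished sub-multisets μ(i) by the sequences d(i), and the complement μ∖∪μ(i) by π.) -/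

import Mathlib

open Nat Finset in
lemma aux_multinomial_subset {α : Type*} [DecidableEq α] {s t : Finset α} (h : s ⊆ t) (f : α → ℕ)
    (hf : ∀ a ∈ t, a ∉ s → f a = 0) : Nat.multinomial s f = Nat.multinomial t f := by
  have hs : ∑ i ∈ s, f i = ∑ i ∈ t, f i := Finset.sum_subset h hf
  have hp : ∏ i ∈ s, (f i)! = ∏ i ∈ t, (f i)! := by
    refine Finset.prod_subset h ?_
    intro a ha hna; rw [hf a ha hna]; rfl
  have h1 := Nat.multinomial_spec s f
  have h2 := Nat.multinomial_spec t f
  have hP : 0 < ∏ i ∈ t, (f i)! := Finset.prod_pos fun i _ => Nat.factorial_pos _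
  have : (∏ i ∈ t, (f i)!) * Nat.multinomial s f = (∏ i ∈ t, (f i)!) * Nat.multinomial t f := by
    rw [h2, ← hp, h1, hs]
  exact Nat.eq_of_mul_eq_mul_left hP this

open Nat Finset in
lemma aux_multinomial_erase (σ : Multiset ℕ) (hσ : σ ≠ 0) :
    ∑ x ∈ σ.toFinset, Nat.multinomial (σ.erase x).toFinset ((σ.erase x).count)
      = Nat.multinomial σ.toFinset σ.count := by
  classical
  set s := σ.toFinset with hs
  set n := Multiset.card σ with hn
  have hn1 : 1 ≤ n := by
    rw [hn, Nat.one_le_iff_ne_zero]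
    simpa using hσ
  -- replace each erase-toFinset by s
  have hrw : ∀ x ∈ s, Nat.multinomial (σ.erase x).toFinset ((σ.erase x).count)
      = Nat.multinomial s ((σ.erase x).count) := by
    intro x hx
    refine aux_multinomial_subset ?_ _ ?_
    · exact Multiset.toFinset_subset.2 (Multiset.erase_subset _ _)
    · intro a _ hna
      exact Multiset.count_eq_zero.2 (by simpa using hna)
  rw [Finset.sum_congr rfl hrw]
  set P := ∏ y ∈ s, (σ.count y)! with hP
  have hPpos : 0 < P := Finset.prod_pos fun i _ => Nat.factorial_pos _
  refine Nat.eq_of_mul_eq_mul_left hPpos ?_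
  rw [Finset.mul_sum]
  have hsum : ∀ x ∈ s, ∑ y ∈ s, (σ.erase x).count y = n - 1 := by
    intro x hx
    have hsub : (σ.erase x).toFinset ⊆ s := Multiset.toFinset_subset.2 (Multiset.erase_subset _ _)
    rw [← Finset.sum_subset hsub (fun a _ hna => Multiset.count_eq_zero.2 (by simpa using hna))]
    rw [Multiset.toFinset_sum_count_eq, Multiset.card_erase_of_mem (Multiset.mem_toFinset.1 hx)]
    simp [Nat.pred_eq_sub_one, hn]
  have hterm : ∀ x ∈ s, P * Nat.multinomial s ((σ.erase x).count) = σ.count x * (n-1)! := by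
    intro x hx
    have hx' : x ∈ σ := Multiset.mem_toFinset.1 hx
    have hQ : P = σ.count x * ∏ y ∈ s, ((σ.erase x).count y)! := by
      rw [hP, ← Finset.mul_prod_erase s _ hx, ← Finset.mul_prod_erase s (fun y => ((σ.erase x).count y)!) hx]
      rw [Multiset.count_erase_self]
      have hcx : σ.count x = (σ.count x - 1) + 1 := (Nat.succ_pred_eq_of_pos (Multiset.count_pos.2 hx')).symm
      rw [← mul_assoc]
      congr 1
      · calc (σ.count x)! = ((σ.count x - 1) + 1)! := by rw [← hcx]
          _ = ((σ.count x - 1) + 1) * (σ.count x - 1)! := Nat.factorial_succ _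
          _ = σ.count x * (σ.count x - 1)! := by rw [← hcx]
      · refine Finset.prod_congr rfl ?_
        intro y hy
        rw [Multiset.count_erase_of_ne (Finset.mem_erase.1 hy).1]
    rw [hQ, mul_assoc, Nat.multinomial_spec, hsum x hx]
  rw [Finset.sum_congr rfl hterm, ← Finset.sum_mul, Multiset.toFinset_sum_count_eq, ← hn,
    Nat.multinomial_spec, Multiset.toFinset_sum_count_eq, ← hn]
  have : n = (n-1) + 1 := (Nat.succ_pred_eq_of_pos hn1).symm
  rw [this, Nat.factorial_succ]
  simp


def Conf (ℓ : ℕ) (σ : Fin ℓ → Multiset ℕ) (π : List ℕ) : Set (List ℕ × (Fin ℓ → List ℕ)) :=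
  {p : List ℕ × (Fin ℓ → List ℕ) |
        (∀ x ∈ p.1, 0 < x) ∧
        (∀ i, (p.2 i).length = p.1.length) ∧
        (∀ j : Fin p.1.length, ∑ i, (p.2 i).getD j.1 0 ≤ p.1.get j) ∧
        (∀ i, ((p.2 i : Multiset ℕ).filter (· ≠ 0)) = σ i) ∧
        ((List.ofFn fun j : Fin p.1.length =>
            p.1.get j - ∑ i, (p.2 i).getD j.1 0).filter (fun x => x ≠ 0) = π)}

def Cext {ℓ : ℕ} (d₀ : Fin ℓ → ℕ) (r : ℕ) (p : List ℕ × (Fin ℓ → List ℕ)) :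
    List ℕ × (Fin ℓ → List ℕ) :=
  ((∑ i, d₀ i + r) :: p.1, fun i => d₀ i :: p.2 i)

def Cnext {ℓ : ℕ} (σ : Fin ℓ → Multiset ℕ) (d₀ : Fin ℓ → ℕ) : Fin ℓ → Multiset ℕ :=
  fun i => if d₀ i = 0 then σ i else (σ i).erase (d₀ i)

lemma conf_pi_len {ℓ : ℕ} {σ : Fin ℓ → Multiset ℕ} {π : List ℕ}
    {p : List ℕ × (Fin ℓ → List ℕ)} (hp : p ∈ Conf ℓ σ π) : π.length ≤ p.1.length := by
  obtain ⟨-, -, -, -, h5⟩ := hp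
  calc π.length = _ := by rw [← h5]
    _ ≤ (List.ofFn fun j : Fin p.1.length =>
            p.1.get j - ∑ i, (p.2 i).getD j.1 0).length := List.length_filter_le _ _
    _ = p.1.length := List.length_ofFn

lemma conf_cons_iff {ℓ : ℕ} (σ : Fin ℓ → Multiset ℕ) (π : List ℕ)
    (c₀ : ℕ) (c' : List ℕ) (d₀ : Fin ℓ → ℕ) (d' : Fin ℓ → List ℕ) :
    (c₀ :: c', fun i => d₀ i :: d' i) ∈ Conf ℓ σ π ↔
      (0 < c₀ ∧ ∑ i, d₀ i ≤ c₀ ∧ (∀ i, d₀ i ≠ 0 → d₀ i ∈ σ i) ∧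
        ((c₀ - ∑ i, d₀ i = 0 ∧ (c', d') ∈ Conf ℓ (Cnext σ d₀) π) ∨
         (c₀ - ∑ i, d₀ i ≠ 0 ∧ π ≠ [] ∧ π.headI = c₀ - ∑ i, d₀ i ∧
           (c', d') ∈ Conf ℓ (Cnext σ d₀) π.tail))) := by
  classical
  have hofn : (List.ofFn fun j : Fin (c₀ :: c').length =>
        (c₀ :: c').get j - ∑ i, (d₀ i :: d' i).getD j.1 0)
      = (c₀ - ∑ i, d₀ i) :: (List.ofFn fun j : Fin c'.length =>
          c'.get j - ∑ i, (d' i).getD j.1 0) := by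
    rw [List.ofFn_succ]
    simp [Fin.succ]
  constructor
  · rintro ⟨h1, h2, h3, h4, h5⟩
    have hc₀ : 0 < c₀ := h1 c₀ (by simp)
    have hle : ∑ i, d₀ i ≤ c₀ := by
      have := h3 ⟨0, by simp⟩
      simpa using this
    have hmem : ∀ i, d₀ i ≠ 0 → d₀ i ∈ σ i := by
      intro i hi
      rw [← h4 i]
      simp [Multiset.mem_filter, hi]
    have hσ' : ∀ i, ((d' i : Multiset ℕ).filter (· ≠ 0)) = Cnext σ d₀ i := by
      intro i
      have h4i := h4 i
      rw [show ((d₀ i :: d' i : List ℕ) : Multiset ℕ) = d₀ i ::ₘ (d' i : Multiset ℕ) from rfl]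
        at h4i
      by_cases hz : d₀ i = 0
      · rw [Multiset.filter_cons_of_neg _ (by simp [hz])] at h4i
        simp [Cnext, hz, h4i]
      · rw [Multiset.filter_cons_of_pos _ (by simp [hz])] at h4i
        simp only [Cnext, if_neg hz, ← h4i]
        rw [Multiset.erase_cons_head]
    have hconf' : ∀ π'', (List.ofFn fun j : Fin c'.length =>
          c'.get j - ∑ i, (d' i).getD j.1 0).filter (fun x => x ≠ 0) = π'' →
        (c', d') ∈ Conf ℓ (Cnext σ d₀) π'' := by
      intro π'' h5'
      refine ⟨fun x hx => h1 x (by simp [hx]), fun i => by simpa using (h2 i), ?_, hσ', h5'⟩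
      intro j
      have := h3 j.succ
      simpa using this
    refine ⟨hc₀, hle, hmem, ?_⟩
    rw [hofn] at h5
    by_cases hr : c₀ - ∑ i, d₀ i = 0
    · left
      refine ⟨hr, hconf' π ?_⟩
      rw [← h5, List.filter_cons_of_neg (by simp [hr])]
    · right
      rw [List.filter_cons_of_pos (by simpa using hr)] at h5
      refine ⟨hr, ?_, ?_, hconf' π.tail ?_⟩
      · rw [← h5]; simp
      · rw [← h5]; simp
      · rw [← h5]; simp
  · rintro ⟨hc₀, hle, hmem, hrest⟩
    have hcore : ∀ π'', (c', d') ∈ Conf ℓ (Cnext σ d₀) π'' →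
        (∀ x ∈ c₀ :: c', 0 < x) ∧ (∀ i, (d₀ i :: d' i).length = (c₀ :: c').length) ∧
        (∀ j : Fin (c₀ :: c').length, ∑ i, (d₀ i :: d' i).getD j.1 0 ≤ (c₀ :: c').get j) ∧
        (∀ i, (((d₀ i :: d' i : List ℕ) : Multiset ℕ).filter (· ≠ 0)) = σ i) ∧
        ((List.ofFn fun j : Fin (c₀ :: c').length =>
            (c₀ :: c').get j - ∑ i, (d₀ i :: d' i).getD j.1 0).filter (fun x => x ≠ 0)
          = ((c₀ - ∑ i, d₀ i) :: (List.ofFn fun j : Fin c'.length =>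
            c'.get j - ∑ i, (d' i).getD j.1 0)).filter (fun x => x ≠ 0)) := by
      intro π'' hp'
      obtain ⟨h1, h2, h3, h4, h5⟩ := hp'
      refine ⟨?_, ?_, ?_, ?_, ?_⟩
      · intro x hx
        rcases List.mem_cons.1 hx with hx | hx
        · exact hx ▸ hc₀
        · exact h1 x hx
      · intro i; simp [h2 i]
      · intro j
        refine Fin.cases ?_ ?_ j
        · simpa using hle
        · intro k
          have := h3 k
          simpa using this
      · intro i
        have := h4 i
        rw [show ((d₀ i :: d' i : List ℕ) : Multiset ℕ) = d₀ i ::ₘ (d' i : Multiset ℕ) from rfl]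
        by_cases hz : d₀ i = 0
        · rw [Multiset.filter_cons_of_neg _ (by simp [hz])]
          rw [this]; simp [Cnext, hz]
        · rw [Multiset.filter_cons_of_pos _ (by simp [hz]), this]
          simp only [Cnext, if_neg hz]
          rw [Multiset.cons_erase (hmem i hz)]
      · rw [hofn]
    rcases hrest with ⟨hr, hp'⟩ | ⟨hr, hne, hhd, hp'⟩
    · obtain ⟨g1, g2, g3, g4, g5⟩ := hcore π hp'
      refine ⟨g1, g2, g3, g4, ?_⟩
      rw [g5, List.filter_cons_of_neg (by simp [hr])]
      exact hp'.2.2.2.2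
    · obtain ⟨g1, g2, g3, g4, g5⟩ := hcore π.tail hp'
      refine ⟨g1, g2, g3, g4, ?_⟩
      rw [g5, List.filter_cons_of_pos (by simpa using hr)]
      rw [hp'.2.2.2.2]
      cases π with
      | nil => exact absurd rfl hne
      | cons a t =>
        simp only [List.headI] at hhd
        simp [← hhd]

lemma conf_nil_iff {ℓ : ℕ} (σ : Fin ℓ → Multiset ℕ) (π : List ℕ) (d : Fin ℓ → List ℕ) :
    (([], d) ∈ Conf ℓ σ π) ↔ (∀ i, d i = []) ∧ (∀ i, σ i = 0) ∧ π = [] := by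
  constructor
  · rintro ⟨-, h2, -, h4, h5⟩
    have hd : ∀ i, d i = [] := fun i => List.length_eq_zero_iff.1 (h2 i)
    refine ⟨hd, fun i => ?_, ?_⟩
    · rw [← h4 i]; simp [hd]
    · rw [← h5]
      simp
  · rintro ⟨hd, hσ, hπ⟩
    exact ⟨by simp, fun i => by simp [hd], fun j => j.elim0, fun i => by simp [hd, hσ],
      by simp [hπ]⟩

noncomputable def CA {ℓ : ℕ} (σ : Fin ℓ → Multiset ℕ) (π : List ℕ) :
    Finset (Bool × (Fin ℓ → ℕ)) := by
  classical
  exact ((Finset.univ : Finset Bool) ×ˢ Fintype.piFinset fun i => insert 0 (σ i).toFinset).filter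
    (fun bd => if bd.1 then π ≠ [] else ∃ i, bd.2 i ≠ 0)

lemma conf_eq_biUnion {ℓ : ℕ} (σ : Fin ℓ → Multiset ℕ) (π : List ℕ)
    (hπ : ∀ x ∈ π, 0 < x) (hnb : ¬((∀ i, σ i = 0) ∧ π = [])) :
    Conf ℓ σ π = ⋃ bd ∈ (CA σ π : Set (Bool × (Fin ℓ → ℕ))),
      Cext bd.2 (if bd.1 then π.headI else 0) ''
        Conf ℓ (Cnext σ bd.2) (if bd.1 then π.tail else π) := by
  classical
  ext p
  simp only [Set.mem_iUnion, Set.mem_image, Finset.mem_coe, exists_prop]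
  constructor
  · intro hp
    match hc : p, hp with
    | ⟨[], d⟩, hp =>
      obtain ⟨-, h0, -⟩ := (conf_nil_iff σ π d).1 hp
      exact absurd ⟨h0, by
        obtain ⟨-, -, h⟩ := (conf_nil_iff σ π d).1 hp; exact h⟩ hnb
    | ⟨c₀ :: c', d⟩, hp =>
      have hdlen : ∀ i, (d i).length = c'.length + 1 := by
        intro i; simpa using hp.2.1 i
      have hdeq : d = fun i => (d i).headI :: (d i).tail := by
        funext i
        cases hdi : d i with
        | nil => have := hdlen i; rw [hdi] at this; simp at this
        | cons a t => simp [hdi]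
      set d₀ : Fin ℓ → ℕ := fun i => (d i).headI with hd₀
      set d' : Fin ℓ → List ℕ := fun i => (d i).tail with hd'
      rw [show ((c₀ :: c', d) : List ℕ × (Fin ℓ → List ℕ))
          = (c₀ :: c', fun i => d₀ i :: d' i) by rw [Prod.ext_iff]; exact ⟨rfl, hdeq⟩] at hp
      rw [conf_cons_iff] at hp
      obtain ⟨hc₀, hle, hmem, hrest⟩ := hp
      have hpimem : d₀ ∈ Fintype.piFinset fun i => insert 0 (σ i).toFinset := by
        rw [Fintype.mem_piFinset]
        intro i
        by_cases hz : d₀ i = 0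
        · simp [hz]
        · simp [Multiset.mem_toFinset.2 (hmem i hz), hz]
      rcases hrest with ⟨hr, hp'⟩ | ⟨hr, hne, hhd, hp'⟩
      · have hc₀eq : c₀ = ∑ i, d₀ i := by omega
        refine ⟨(false, d₀), ?_, (c', d'), by simpa using hp', ?_⟩
        · rw [CA, Finset.mem_filter]
          refine ⟨by simp [hpimem], ?_⟩
          simp only [if_neg (Bool.false_ne_true)]
          by_contra hall
          push_neg at hall
          rw [Finset.sum_congr rfl fun i _ => hall i] at hc₀eq
          simp at hc₀eq; omega
        · simp only [Cext, if_neg (Bool.false_ne_true)]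
          rw [Prod.ext_iff]
          exact ⟨by simp [← hc₀eq], hdeq.symm⟩
      · refine ⟨(true, d₀), ?_, (c', d'), by simpa using hp', ?_⟩
        · rw [CA, Finset.mem_filter]
          exact ⟨by simp [hpimem], by simpa using hne⟩
        · simp only [Cext, if_pos rfl, if_true]
          rw [Prod.ext_iff]
          refine ⟨?_, hdeq.symm⟩
          show (∑ i, d₀ i + π.headI) :: c' = c₀ :: c'
          congr 1
          omega
  · rintro ⟨⟨b, d₀⟩, hbd, p', hp', rfl⟩
    rw [CA, Finset.mem_filter] at hbd
    obtain ⟨hbd1, hbd2⟩ := hbd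
    have hpim : ∀ a, d₀ a = 0 ∨ d₀ a ∈ σ a := by
      simpa using (Finset.mem_product.1 hbd1).2
    have hpimem : ∀ i, d₀ i ≠ 0 → d₀ i ∈ σ i := fun i hz => (hpim i).resolve_left hz
    match hp'' : p', hp' with
    | (c', d'), hp' =>
      rw [show Cext d₀ (if b then π.headI else 0) (c', d')
          = (((∑ i, d₀ i) + (if b then π.headI else 0)) :: c', fun i => d₀ i :: d' i) from rfl]
      rw [conf_cons_iff]
      cases b with
      | false =>
        simp only [if_neg (Bool.false_ne_true)] at hbd2 hp' ⊢
        obtain ⟨i0, hi0⟩ := hbd2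
        have hpos : 0 < ∑ i, d₀ i :=
          Finset.sum_pos' (fun i _ => Nat.zero_le _) ⟨i0, Finset.mem_univ _, Nat.pos_of_ne_zero hi0⟩
        refine ⟨by omega, by omega, hpimem, Or.inl ⟨by omega, ?_⟩⟩
        simpa using hp'
      | true =>
        simp only [if_pos rfl, if_true] at hbd2 hp' ⊢
        have hne : π ≠ [] := by simpa using hbd2
        have hhd : 0 < π.headI := by
          cases π with
          | nil => exact absurd rfl hne
          | cons a t => exact hπ a (by simp)
        refine ⟨by omega, by omega, hpimem, Or.inr ⟨by omega, hne, by omega, ?_⟩⟩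
        simpa using hp'

noncomputable def Mfun (s : Multiset ℕ) : ℤ :=
  (-1 : ℤ) ^ (Multiset.card s) * (Nat.multinomial s.toFinset s.count : ℤ)

lemma Mfun_zero : Mfun 0 = 1 := by simp [Mfun]

lemma Mfun_erase_sum (s : Multiset ℕ) (hs : s ≠ 0) :
    ∑ x ∈ s.toFinset, Mfun (s.erase x) = -Mfun s := by
  have hcard : 1 ≤ Multiset.card s := by
    rw [Nat.one_le_iff_ne_zero]; simpa using hs
  have hc : ∀ x ∈ s.toFinset, Multiset.card (s.erase x) = Multiset.card s - 1 := by
    intro x hx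
    rw [Multiset.card_erase_of_mem (Multiset.mem_toFinset.1 hx)]
    simp [Nat.pred_eq_sub_one]
  have hsign : (-1 : ℤ) ^ (Multiset.card s) = (-1) ^ (Multiset.card s - 1) * (-1) := by
    conv_lhs => rw [show Multiset.card s = (Multiset.card s - 1) + 1 by omega]
    rw [pow_succ]
  calc ∑ x ∈ s.toFinset, Mfun (s.erase x)
      = ∑ x ∈ s.toFinset, (-1 : ℤ) ^ (Multiset.card s - 1) *
          (Nat.multinomial (s.erase x).toFinset ((s.erase x).count) : ℤ) := by
        refine Finset.sum_congr rfl fun x hx => ?_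
        rw [Mfun, hc x hx]
    _ = (-1 : ℤ) ^ (Multiset.card s - 1) *
        ((∑ x ∈ s.toFinset, Nat.multinomial (s.erase x).toFinset ((s.erase x).count) : ℕ) : ℤ) := by
        rw [← Finset.mul_sum]; push_cast; ring
    _ = (-1 : ℤ) ^ (Multiset.card s - 1) * (Nat.multinomial s.toFinset s.count : ℤ) := by
        rw [aux_multinomial_erase s hs]
    _ = -Mfun s := by
        rw [Mfun, hsign]; ring

lemma final_alg {ℓ : ℕ} (σ : Fin ℓ → Multiset ℕ) (π : List ℕ)
    (hσ : ∀ i, ∀ x ∈ σ i, 0 < x) (hnb : ¬((∀ i, σ i = 0) ∧ π = [])) :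
    ∑ bd ∈ CA σ π, ((if bd.1 = true then (1 : ℤ) else -1) * ∏ i, Mfun (Cnext σ bd.2 i))
      = ∏ i, Mfun (σ i) := by
  classical
  have h0D : (fun _ => 0 : Fin ℓ → ℕ) ∈ Fintype.piFinset fun i => insert (0:ℕ) (σ i).toFinset := by
    rw [Fintype.mem_piFinset]; intro i; simp
  have hG : ∑ d₀ ∈ Fintype.piFinset (fun i => insert (0:ℕ) (σ i).toFinset),
        ∏ i, Mfun (Cnext σ d₀ i)
      = ∏ i, (if σ i = 0 then (1:ℤ) else 0) := by
    have h1 : ∑ d₀ ∈ Fintype.piFinset (fun i => insert (0:ℕ) (σ i).toFinset),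
          ∏ i, Mfun (Cnext σ d₀ i)
        = ∏ i, ∑ x ∈ insert (0:ℕ) (σ i).toFinset,
            Mfun (if x = 0 then σ i else (σ i).erase x) :=
      (Finset.prod_univ_sum (fun i => insert (0:ℕ) (σ i).toFinset)
        (fun i x => Mfun (if x = 0 then σ i else (σ i).erase x))).symm
    rw [h1]
    refine Finset.prod_congr rfl fun i _ => ?_
    have h0 : (0:ℕ) ∉ (σ i).toFinset := by
      simp only [Multiset.mem_toFinset]
      intro h
      exact absurd (hσ i 0 h) (lt_irrefl 0)
    rw [Finset.sum_insert h0]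
    have hcg : ∀ x ∈ (σ i).toFinset,
        Mfun (if x = 0 then σ i else (σ i).erase x) = Mfun ((σ i).erase x) := by
      intro x hx
      rw [if_neg]
      intro h
      exact h0 (h ▸ hx)
    rw [if_pos rfl, Finset.sum_congr rfl hcg]
    by_cases hz : σ i = 0
    · simp [hz, Mfun_zero]
    · rw [Mfun_erase_sum (σ i) hz, if_neg hz]
      ring
  rw [show CA σ π = ((Finset.univ : Finset Bool) ×ˢ
        Fintype.piFinset fun i => insert (0:ℕ) (σ i).toFinset).filter
        (fun bd => if bd.1 then π ≠ [] else ∃ i, bd.2 i ≠ 0) from rfl]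
  rw [Finset.sum_filter, Finset.sum_product, Fintype.sum_bool]
  have htrue : ∑ d₀ ∈ Fintype.piFinset (fun i => insert (0:ℕ) (σ i).toFinset),
        (if (if ((true:Bool) = true) then π ≠ [] else ∃ i, d₀ i ≠ 0)
          then (if ((true:Bool) = true) then (1:ℤ) else -1) * ∏ i, Mfun (Cnext σ d₀ i) else 0)
      = if π ≠ [] then ∏ i, (if σ i = 0 then (1:ℤ) else 0) else 0 := by
    simp only [if_pos (rfl : (true:Bool) = true), if_true, one_mul]
    by_cases hp : π ≠ []
    · rw [if_pos hp, ← hG]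
      exact Finset.sum_congr rfl fun d₀ _ => if_pos hp
    · rw [if_neg hp]
      exact Finset.sum_eq_zero fun d₀ _ => if_neg hp
  have hfalse : ∑ d₀ ∈ Fintype.piFinset (fun i => insert (0:ℕ) (σ i).toFinset),
        (if (if ((false:Bool) = true) then π ≠ [] else ∃ i, d₀ i ≠ 0)
          then (if ((false:Bool) = true) then (1:ℤ) else -1) * ∏ i, Mfun (Cnext σ d₀ i) else 0)
      = ∏ i, Mfun (σ i) - ∏ i, (if σ i = 0 then (1:ℤ) else 0) := by
    have key : ∀ d₀ ∈ Fintype.piFinset (fun i => insert (0:ℕ) (σ i).toFinset),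
        (if (if ((false:Bool) = true) then π ≠ [] else ∃ i, d₀ i ≠ 0)
          then (if ((false:Bool) = true) then (1:ℤ) else -1) * ∏ i, Mfun (Cnext σ d₀ i) else 0)
        = (if d₀ = (fun _ => 0) then ∏ i, Mfun (Cnext σ d₀ i) else 0)
          - ∏ i, Mfun (Cnext σ d₀ i) := by
      intro d₀ _
      simp only [show ((false:Bool) = true) = False from by simp, if_false]
      by_cases hz : d₀ = (fun _ => 0)
      · have hne : ¬∃ i, d₀ i ≠ 0 := by
          push_neg
          intro i
          exact congrFun hz i
        rw [if_neg hne, if_pos hz]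
        ring
      · have hex : ∃ i, d₀ i ≠ 0 := by
          by_contra hc
          push_neg at hc
          exact hz (funext hc)
        rw [if_pos hex, if_neg hz]
        ring
    rw [Finset.sum_congr rfl key, Finset.sum_sub_distrib, Finset.sum_ite_eq' _ _ _, if_pos h0D, hG]
    have hcz : (∏ i, Mfun (Cnext σ (fun _ => 0) i)) = ∏ i, Mfun (σ i) :=
      Finset.prod_congr rfl fun i _ => congrArg Mfun (by simp [Cnext])
    rw [hcz]
  rw [htrue, hfalse]
  by_cases hp : π ≠ []
  · rw [if_pos hp]; ring
  · rw [if_neg hp]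
    push_neg at hp
    have hex : ∃ i, σ i ≠ 0 := by
      by_contra hall
      push_neg at hall
      exact hnb ⟨hall, hp⟩
    obtain ⟨i0, hi0⟩ := hex
    have hz0 : (∏ i, if σ i = 0 then (1:ℤ) else 0) = 0 :=
      Finset.prod_eq_zero (Finset.mem_univ i0) (if_neg hi0)
    rw [hz0]
    ring

lemma cext_inj {ℓ : ℕ} (d₀ : Fin ℓ → ℕ) (r : ℕ) : Function.Injective (Cext d₀ r) := by
  intro p q h
  rw [Cext, Cext, Prod.ext_iff] at h
  obtain ⟨h1, h2⟩ := h
  refine Prod.ext ?_ ?_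
  · simpa using h1
  · funext i
    have := congrFun h2 i
    simpa using this

lemma conf_base {ℓ : ℕ} (σ : Fin ℓ → Multiset ℕ) (π : List ℕ)
    (hb1 : ∀ i, σ i = 0) (hb2 : π = []) :
    (Conf ℓ σ π).Finite ∧
    (∑ᶠ p ∈ Conf ℓ σ π, ((-1 : ℤ) ^ (p.1.length - π.length))) = ∏ i, Mfun (σ i) := by
  have hset : Conf ℓ σ π = {(([], fun _ => []) : List ℕ × (Fin ℓ → List ℕ))} := by
    ext p
    constructor
    · intro hp
      match p, hp with
      | ([], d), hp =>
        obtain ⟨hd, -, -⟩ := (conf_nil_iff σ π d).1 hp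
        rw [Set.mem_singleton_iff, Prod.ext_iff]
        exact ⟨rfl, funext hd⟩
      | (c₀ :: c', d), hp =>
        exfalso
        have hdlen : ∀ i, (d i).length = c'.length + 1 := by
          intro i; simpa using hp.2.1 i
        have hdeq : d = fun i => (d i).headI :: (d i).tail := by
          funext i
          cases hdi : d i with
          | nil => have := hdlen i; rw [hdi] at this; simp at this
          | cons a t => simp [hdi]
        rw [show ((c₀ :: c', d) : List ℕ × (Fin ℓ → List ℕ))
            = (c₀ :: c', fun i => (d i).headI :: (d i).tail) by
          rw [Prod.ext_iff]; exact ⟨rfl, hdeq⟩] at hp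
        rw [conf_cons_iff] at hp
        obtain ⟨hc₀, hle, hmem, hrest⟩ := hp
        have hz : ∀ i, (d i).headI = 0 := by
          intro i
          by_contra hzz
          have := hmem i hzz
          rw [hb1 i] at this
          simp at this
        have hs0 : ∑ i, (d i).headI = 0 := Finset.sum_eq_zero fun i _ => hz i
        rcases hrest with ⟨hr, -⟩ | ⟨-, hne, -, -⟩
        · omega
        · exact hne hb2
    · intro hp
      rw [Set.mem_singleton_iff] at hp
      subst hp
      exact (conf_nil_iff _ _ _).2 ⟨fun _ => rfl, hb1, hb2⟩
  rw [hset]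
  refine ⟨Set.finite_singleton _, ?_⟩
  rw [finsum_mem_singleton]
  subst hb2
  simp only [List.length_nil]
  rw [Finset.prod_congr rfl fun i (_ : i ∈ Finset.univ) =>
    (congrArg Mfun (hb1 i)).trans Mfun_zero]
  simp

lemma conf_key {ℓ : ℕ} (n : ℕ) : ∀ (σ : Fin ℓ → Multiset ℕ) (π : List ℕ),
    (∀ i, ∀ x ∈ σ i, 0 < x) → (∀ x ∈ π, 0 < x) →
    (∑ i, Multiset.card (σ i)) + π.length ≤ n →
    (Conf ℓ σ π).Finite ∧
    (∑ᶠ p ∈ Conf ℓ σ π, ((-1 : ℤ) ^ (p.1.length - π.length))) = ∏ i, Mfun (σ i) := by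
  induction n with
  | zero =>
    intro σ π hσ hπ hm
    have hb1 : ∀ i, σ i = 0 := by
      intro i
      have h1 : Multiset.card (σ i) ≤ ∑ j, Multiset.card (σ j) :=
        Finset.single_le_sum (f := fun j => Multiset.card (σ j))
          (fun j _ => Nat.zero_le _) (Finset.mem_univ i)
      exact Multiset.card_eq_zero.1 (by omega)
    have hb2 : π = [] := List.length_eq_zero_iff.1 (by omega)
    exact conf_base σ π hb1 hb2
  | succ n ih =>
    intro σ π hσ hπ hm
    by_cases hb : (∀ i, σ i = 0) ∧ π = []
    · exact conf_base σ π hb.1 hb.2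
    · have hdec := conf_eq_biUnion σ π hπ hb
      -- facts about members of CA
      have hCA : ∀ bd : Bool × (Fin ℓ → ℕ), bd ∈ CA σ π →
          (∀ i, bd.2 i = 0 ∨ bd.2 i ∈ σ i) ∧
          (if bd.1 then π ≠ [] else ∃ i, bd.2 i ≠ 0) := by
        intro bd hbd
        rw [CA, Finset.mem_filter] at hbd
        exact ⟨by simpa using (Finset.mem_product.1 hbd.1).2, hbd.2⟩
      have hIH : ∀ bd ∈ CA σ π,
          (Conf ℓ (Cnext σ bd.2) (if bd.1 then π.tail else π)).Finite ∧
          (∑ᶠ p ∈ Conf ℓ (Cnext σ bd.2) (if bd.1 then π.tail else π),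
            ((-1 : ℤ) ^ (p.1.length - (if bd.1 then π.tail else π).length)))
            = ∏ i, Mfun (Cnext σ bd.2 i) := by
        intro bd hbd
        obtain ⟨hpi, hadm⟩ := hCA bd hbd
        refine ih _ _ ?_ ?_ ?_
        · intro i x hx
          rw [Cnext] at hx
          by_cases hz : bd.2 i = 0
          · rw [if_pos hz] at hx; exact hσ i x hx
          · rw [if_neg hz] at hx; exact hσ i x (Multiset.mem_of_mem_erase hx)
        · cases hb1 : bd.1
          · simpa using hπ
          · simp only [if_pos rfl]
            exact fun x hx => hπ x (List.tail_subset π hx)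
        · have hcle : ∀ i, Multiset.card (Cnext σ bd.2 i) ≤ Multiset.card (σ i) := by
            intro i
            rw [Cnext]
            by_cases hz : bd.2 i = 0
            · rw [if_pos hz]
            · rw [if_neg hz]
              exact (Multiset.card_erase_le).trans le_rfl
          cases hb1 : bd.1 with
          | true =>
            rw [hb1] at hadm
            have hne : π ≠ [] := by simpa using hadm
            have hlen : 1 ≤ π.length := List.length_pos_iff.2 hne
            have hsle : ∑ i, Multiset.card (Cnext σ bd.2 i) ≤ ∑ i, Multiset.card (σ i) :=
              Finset.sum_le_sum fun i _ => hcle i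
            simp only [show (true = true) = True from by simp, if_true, List.length_tail]
            omega
          | false =>
            rw [hb1] at hadm
            have hex : ∃ i, bd.2 i ≠ 0 := by simpa using hadm
            obtain ⟨i0, hi0⟩ := hex
            have hmem : bd.2 i0 ∈ σ i0 := (hpi i0).resolve_left hi0
            have hlt : Multiset.card (Cnext σ bd.2 i0) < Multiset.card (σ i0) := by
              rw [Cnext, if_neg hi0]
              exact Multiset.card_erase_lt_of_mem hmem
            have hslt : ∑ i, Multiset.card (Cnext σ bd.2 i) < ∑ i, Multiset.card (σ i) :=
              Finset.sum_lt_sum (fun i _ => hcle i) ⟨i0, Finset.mem_univ i0, hlt⟩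
            simp only [show (false = true) = False from by simp, if_false]
            omega
      have hdisj : (CA σ π : Set (Bool × (Fin ℓ → ℕ))).PairwiseDisjoint
          (fun bd => Cext bd.2 (if bd.1 then π.headI else 0) ''
            Conf ℓ (Cnext σ bd.2) (if bd.1 then π.tail else π)) := by
        intro bd hbd bd' hbd' hne
        rw [Function.onFun, Set.disjoint_left]
        rintro q ⟨p, hp, rfl⟩ ⟨p', hp', heq⟩
        apply hne
        -- extract d₀ equality
        have hsnd : ∀ i, bd'.2 i :: p'.2 i = bd.2 i :: p.2 i := by
          intro i
          exact congrFun (congrArg Prod.snd heq) i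
        have hd : bd'.2 = bd.2 := funext fun i => by
          have h := hsnd i
          injection h
        have hfst : ∑ i, bd'.2 i + (if bd'.1 then π.headI else 0)
            = ∑ i, bd.2 i + (if bd.1 then π.headI else 0) := by
          have h := congrArg Prod.fst heq
          simp only [Cext] at h
          injection h
        rw [hd] at hfst
        have hr : (if bd'.1 then π.headI else 0) = (if bd.1 then π.headI else 0) := by omega
        have hb1 : bd'.1 = bd.1 := by
          by_contra hbb
          have hπpos : 0 < π.headI := by
            cases hcb : bd.1 with
            | true =>
              have := (hCA bd (Finset.mem_coe.1 hbd)).2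
              rw [hcb] at this
              have hne2 : π ≠ [] := by simpa using this
              cases π with
              | nil => exact absurd rfl hne2
              | cons a t => exact hπ a (by simp)
            | false =>
              have := (hCA bd' (Finset.mem_coe.1 hbd')).2
              have hcb' : bd'.1 = true := by
                cases hx : bd'.1
                · exact absurd (hx.trans hcb.symm) hbb
                · rfl
              rw [hcb'] at this
              have hne2 : π ≠ [] := by simpa using this
              cases π with
              | nil => exact absurd rfl hne2
              | cons a t => exact hπ a (by simp)
          cases hcb : bd.1 with
          | true =>
            have hcb' : bd'.1 = false := by
              cases hx : bd'.1
              · rfl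
              · exact absurd (hx.trans hcb.symm) hbb
            rw [hcb, hcb'] at hr
            simp at hr
            omega
          | false =>
            have hcb' : bd'.1 = true := by
              cases hx : bd'.1
              · exact absurd (hx.trans hcb.symm) hbb
              · rfl
            rw [hcb, hcb'] at hr
            simp at hr
            omega
        exact (Prod.ext hb1 hd).symm
      have hfin : (Conf ℓ σ π).Finite := by
        rw [hdec]
        exact Set.Finite.biUnion (CA σ π).finite_toSet
          (fun bd hbd => ((hIH bd (Finset.mem_coe.1 hbd)).1).image _)
      refine ⟨hfin, ?_⟩
      rw [finsum_mem_congr hdec (fun x _ => rfl)]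
      rw [finsum_mem_biUnion hdisj (CA σ π).finite_toSet
        (fun bd hbd => ((hIH bd (Finset.mem_coe.1 hbd)).1).image _)]
      have hinner : ∀ bd ∈ (CA σ π : Set (Bool × (Fin ℓ → ℕ))),
          (∑ᶠ q ∈ Cext bd.2 (if bd.1 then π.headI else 0) ''
              Conf ℓ (Cnext σ bd.2) (if bd.1 then π.tail else π),
            ((-1 : ℤ) ^ (q.1.length - π.length)))
          = (if bd.1 then (1:ℤ) else -1) * ∏ i, Mfun (Cnext σ bd.2 i) := by
        intro bd hbd
        have hbd' := Finset.mem_coe.1 hbd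
        rw [finsum_mem_image ((cext_inj bd.2 _).injOn)]
        have hcongr : ∀ p ∈ Conf ℓ (Cnext σ bd.2) (if bd.1 then π.tail else π),
            ((-1 : ℤ) ^ ((Cext bd.2 (if bd.1 then π.headI else 0) p).1.length - π.length))
            = (if bd.1 then (1:ℤ) else -1) *
              ((-1 : ℤ) ^ (p.1.length - (if bd.1 then π.tail else π).length)) := by
          intro p hp
          have hlen := conf_pi_len hp
          have hext : (Cext bd.2 (if bd.1 then π.headI else 0) p).1.length
              = p.1.length + 1 := by simp [Cext]
          rw [hext]
          cases hb1 : bd.1 with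
          | true =>
            have htmp := (hCA bd hbd').2
            rw [hb1] at htmp
            have hne : π ≠ [] := by simpa using htmp
            have hπl : 1 ≤ π.length := List.length_pos_iff.2 hne
            simp only [show (true = true) = True from by simp, if_true,
              List.length_tail] at hlen ⊢
            have hexp : p.1.length + 1 - π.length = p.1.length - (π.length - 1) := by omega
            rw [hexp, one_mul]
          | false =>
            rw [hb1] at hlen
            simp only [show (false = true) = False from by simp, if_false] at hlen ⊢
            have hexp : p.1.length + 1 - π.length = (p.1.length - π.length) + 1 := by omega
            rw [hexp, pow_succ]
            ring
        rw [finsum_mem_congr rfl hcongr]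
        have hfin' := (hIH bd hbd').1
        have hval := (hIH bd hbd').2
        rw [finsum_mem_eq_finite_toFinset_sum _ hfin'] at hval ⊢
        rw [← Finset.sum_congr rfl (fun p hp => rfl), ← Finset.mul_sum, hval]
      rw [finsum_mem_congr rfl hinner, finsum_mem_coe_finset]
      exact final_alg σ π hσ hb

/-- Lemma 3.7 of the paper.  The element `μ ∈ 𝒬` with exactly `m` distinct parts is
encoded by the sequence `c = (c₁, …, c_m)` of its part-multiplicities, the distinguished
sub-multisets `μ(i)` by sequences `d(i)` of nonnegative integers, and the complement
`μ ∖ ∪ μ(i)` by the sequence `π`.  Then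
`∑ (−1)^{m−h} = ∏ᵢ (−1)^{|σ(i)|} |σ(i)|! / ∏ⱼ a(i)ⱼ!`. -/
theorem stmt1 (ℓ : ℕ) (hl : 1 ≤ ℓ) (σ : Fin ℓ → Multiset ℕ)
    (hσ : ∀ i, ∀ x ∈ σ i, 0 < x) (π : List ℕ) (hπ : ∀ x ∈ π, 0 < x) :
    (∑ᶠ p ∈ {p : List ℕ × (Fin ℓ → List ℕ) |
        (∀ x ∈ p.1, 0 < x) ∧
        (∀ i, (p.2 i).length = p.1.length) ∧
        (∀ j : Fin p.1.length, ∑ i, (p.2 i).getD j.1 0 ≤ p.1.get j) ∧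
        (∀ i, ((p.2 i : Multiset ℕ).filter (· ≠ 0)) = σ i) ∧
        ((List.ofFn fun j : Fin p.1.length =>
            p.1.get j - ∑ i, (p.2 i).getD j.1 0).filter (fun x => x ≠ 0) = π)},
      ((-1 : ℤ) ^ (p.1.length - π.length)))
    = ∏ i, ((-1 : ℤ) ^ (Multiset.card (σ i)) *
        (Nat.multinomial (σ i).toFinset ((σ i).count) : ℤ)) := by
  have h := (conf_key ((∑ i, Multiset.card (σ i)) + π.length) σ π hσ hπ le_rfl).2
  exact h
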